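/- arXiv:2311.01600 — 3 statements merged into one kernel-verified Lean document; each statement's English description precedes it below -/
import Mathlib

section
/- Let (Ω, P) be a probability space, let B : Ω → ℝ be a random variable, let M ≥ 1, and let Ω₁,…,Ω_M be pairwise disjoint events. Let l₁,…,l_M and leak₁,…,leak_M be real numbers such that the sequence i ↦ l_i + leak_i is non-increasing, and let θ ∈ ℝ. Let T_p := { i : l_i > 0 }, and suppose that for every i ∈ T_p the event Ω_i is contained in the event { B ≥ l_i + leak_i + θ }. Then for every j ∈ {1,…,M}: ∑_{i ≤ j, i ∈ T_p} P(Ω_i) ≤ P( B ≥ l_j + leak_j + θ ). -/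
open Classical MeasureTheory

/-- Lemma 3: if on each event `Ωi i` with nontrivial key length (`0 < l i`) the
estimator `B` is at least `l i + leak i + θ`, and `i ↦ l i + leak i` is
non-increasing, then the total probability of the nontrivial events up to `j`
is bounded by the probability that `B ≥ l j + leak j + θ`. -/
theorem sum_prob_nontrivial_events_le {Ω : Type*} [MeasurableSpace Ω]
    (P : Measure Ω) [IsProbabilityMeasure P]
    (B : Ω → ℝ) (hB : Measurable B)
    (M : ℕ) (hM : 1 ≤ M)
    (Ωi : Fin M → Set Ω) (hmeas : ∀ i, MeasurableSet (Ωi i))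
    (hdisj : ∀ i j : Fin M, i ≠ j → Disjoint (Ωi i) (Ωi j))
    (l leak : Fin M → ℝ)
    (hmono : ∀ i j : Fin M, i ≤ j → l j + leak j ≤ l i + leak i)
    (θ : ℝ)
    (hsub : ∀ i : Fin M, 0 < l i → Ωi i ⊆ {ω | l i + leak i + θ ≤ B ω})
    (j : Fin M) :
    ∑ i ∈ Finset.univ.filter (fun i : Fin M => i ≤ j ∧ 0 < l i), P (Ωi i)
      ≤ P {ω | l j + leak j + θ ≤ B ω} := by
  rw [← measure_biUnion_finset (fun a ha b hb hab => hdisj a b hab) (fun i _ => hmeas i)]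
  apply measure_mono
  intro ω hω
  simp only [Set.mem_iUnion] at hω
  obtain ⟨i, hi, hωi⟩ := hω
  simp only [Finset.mem_filter] at hi
  have := hsub i hi.2.2 hωi
  simp only [Set.mem_setOf_eq] at this ⊢
  linarith [hmono i j hi.2.1]
end

section
/- Let (Ω, P) be a finite probability space, let n ∈ ℕ, and for each k ∈ {0,1,…,n} let Ω_k ⊆ Ω be pairwise disjoint events (the event that a key of length k is produced). Let K_A, K_B be random variables which, on the event Ω_k, take values in {0,1}^k, let C be a random variable with values in a finite set 𝒞, and let Ω_EV ⊆ Ω be an event with Ω_k ⊆ Ω_EV for every k (a key is only produced if error-verification passes). Suppose: (correctness) P( K_A ≠ K_B ∧ Ω_EV ) ≤ ε₁; and (secrecy) ∑_{k=0}^{n} (1/2) P(Ω_k) · ∑_{(s,c) ∈ {0,1}^k × 𝒞} | P(K_A = s, C = c | Ω_k) − 2^{−k} P(C = c | Ω_k) | ≤ ε₂. Then (security): ∑_{k=0}^{n} (1/2) P(Ω_k) · ∑_{(s,s',c) ∈ {0,1}^k × {0,1}^k × 𝒞} | P(K_A = s, K_B = s', C = c | Ω_k) − [s = s'] · 2^{−k}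 P(C = c | Ω_k) | ≤ ε₁ + ε₂, where [s = s'] equals 1 if s = s' and 0 otherwise. -/
private lemma sum_comm_out2 {α β δ : Type*} [Fintype α] [Fintype β]
    (S : Finset δ) (f : α → β → δ → ℝ) :
    (∑ a : α, ∑ b : β, ∑ d ∈ S, f a b d) = ∑ d ∈ S, ∑ a : α, ∑ b : β, f a b d := by
  calc (∑ a : α, ∑ b : β, ∑ d ∈ S, f a b d)
      = ∑ a : α, ∑ d ∈ S, ∑ b : β, f a b d :=
        Finset.sum_congr rfl fun a _ => Finset.sum_comm
    _ = ∑ d ∈ S, ∑ a : α, ∑ b : β, f a b d := Finset.sum_comm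

private lemma sum_comm_out3 {α β γ δ : Type*} [Fintype α] [Fintype β] [Fintype γ]
    (S : Finset δ) (f : α → β → γ → δ → ℝ) :
    (∑ a : α, ∑ b : β, ∑ c : γ, ∑ d ∈ S, f a b c d)
      = ∑ d ∈ S, ∑ a : α, ∑ b : β, ∑ c : γ, f a b c d := by
  calc (∑ a : α, ∑ b : β, ∑ c : γ, ∑ d ∈ S, f a b c d)
      = ∑ a : α, ∑ d ∈ S, ∑ b : β, ∑ c : γ, f a b c d :=
        Finset.sum_congr rfl fun a _ => sum_comm_out2 S (f a)
    _ = ∑ d ∈ S, ∑ a : α, ∑ b : β, ∑ c : γ, f a b c d := Finset.sum_comm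

/-- Classical analogue of Lemma 4: for a variable-length protocol,
`ε₁`-correctness and `ε₂`-secrecy together imply `(ε₁+ε₂)`-security.
Keys of length `k` are modelled as elements `⟨k, s⟩` of the sigma type
`Σ k : Fin (n+1), Fin k → Bool`; weighted conditional distances
`P(Ω_k)·|P(·|Ω_k) − ideal|` are written as `|P(· ∧ Ω_k) − ideal·P(Ω_k)|`,
so terms with `P(Ω_k) = 0` vanish. -/
theorem correct_and_secret_implies_secure
    {Ω C : Type*} [Fintype Ω] [Fintype C] [DecidableEq C] [Nonempty C]
    (P : Ω → ℝ) (hP0 : ∀ ω, 0 ≤ P ω) (hP1 : ∑ ω, P ω = 1)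
    (n : ℕ) (Ωk : Fin (n + 1) → Finset Ω)
    (hdisj : ∀ k k' : Fin (n + 1), k ≠ k' → Disjoint (Ωk k) (Ωk k'))
    (KA KB : Ω → (Σ k : Fin (n + 1), Fin (k : ℕ) → Bool))
    (Cr : Ω → C) (ΩEV : Finset Ω)
    (hEV : ∀ k, Ωk k ⊆ ΩEV)
    (hKA : ∀ k, ∀ ω ∈ Ωk k, (KA ω).1 = k)
    (hKB : ∀ k, ∀ ω ∈ Ωk k, (KB ω).1 = k)
    (ε₁ ε₂ : ℝ)
    (hcorr : ∑ ω ∈ ΩEV.filter (fun ω => KA ω ≠ KB ω), P ω ≤ ε₁)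
    (hsecr : ∑ k : Fin (n + 1), (1 / 2) *
        ∑ s : Fin (k : ℕ) → Bool, ∑ c : C,
          |(∑ ω ∈ (Ωk k).filter (fun ω => KA ω = ⟨k, s⟩ ∧ Cr ω = c), P ω)
            - (1 / 2) ^ (k : ℕ) * ∑ ω ∈ (Ωk k).filter (fun ω => Cr ω = c), P ω| ≤ ε₂) :
    ∑ k : Fin (n + 1), (1 / 2) *
        ∑ s : Fin (k : ℕ) → Bool, ∑ s' : Fin (k : ℕ) → Bool, ∑ c : C,
          |(∑ ω ∈ (Ωk k).filter
                (fun ω => KA ω = ⟨k, s⟩ ∧ KB ω = ⟨k, s'⟩ ∧ Cr ω = c), P ω)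
            - (if s = s' then
                (1 / 2) ^ (k : ℕ) * ∑ ω ∈ (Ωk k).filter (fun ω => Cr ω = c), P ω
              else 0)| ≤ ε₁ + ε₂ := by
  classical
  have key : ∀ k : Fin (n + 1),
      (1 / 2) *
        ∑ s : Fin (k : ℕ) → Bool, ∑ s' : Fin (k : ℕ) → Bool, ∑ c : C,
          |(∑ ω ∈ (Ωk k).filter
                (fun ω => KA ω = ⟨k, s⟩ ∧ KB ω = ⟨k, s'⟩ ∧ Cr ω = c), P ω)
            - (if s = s' then
                (1 / 2) ^ (k : ℕ) * ∑ ω ∈ (Ωk k).filter (fun ω => Cr ω = c), P ω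
              else 0)|
      ≤ (∑ ω ∈ (Ωk k).filter (fun ω => KA ω ≠ KB ω), P ω)
        + (1 / 2) *
          ∑ s : Fin (k : ℕ) → Bool, ∑ c : C,
            |(∑ ω ∈ (Ωk k).filter (fun ω => KA ω = ⟨k, s⟩ ∧ Cr ω = c), P ω)
              - (1 / 2) ^ (k : ℕ) * ∑ ω ∈ (Ωk k).filter (fun ω => Cr ω = c), P ω| := by
    intro k
    set T : (Fin (k : ℕ) → Bool) → (Fin (k : ℕ) → Bool) → C → ℝ := fun s s' c =>
      ∑ ω ∈ (Ωk k).filter (fun ω => KA ω = ⟨k, s⟩ ∧ KB ω = ⟨k, s'⟩ ∧ Cr ω = c), P ω with hT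
    set A : (Fin (k : ℕ) → Bool) → C → ℝ := fun s c =>
      ∑ ω ∈ (Ωk k).filter (fun ω => KA ω = ⟨k, s⟩ ∧ Cr ω = c), P ω with hA
    set I : C → ℝ := fun c =>
      (1 / 2) ^ (k : ℕ) * ∑ ω ∈ (Ωk k).filter (fun ω => Cr ω = c), P ω with hI
    have Tnn : ∀ s s' c, 0 ≤ T s s' c := fun _ _ _ =>
      Finset.sum_nonneg fun ω _ => hP0 ω
    have TleA : ∀ s s' c, T s s' c ≤ A s c := by
      intro s s' c
      apply Finset.sum_le_sum_of_subset_of_nonneg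
      · intro ω hω
        rw [Finset.mem_filter] at hω ⊢
        exact ⟨hω.1, hω.2.1, hω.2.2.2⟩
      · intro ω _ _; exact hP0 ω
    -- fiber sums
    have E1 : (∑ s : Fin (k : ℕ) → Bool, ∑ s' : Fin (k : ℕ) → Bool, ∑ c : C, T s s' c)
        = ∑ ω ∈ Ωk k, P ω := by
      simp only [hT, Finset.sum_filter]
      rw [sum_comm_out3]
      refine Finset.sum_congr rfl fun ω hω => ?_
      have hka := hKA k ω hω
      have hkb := hKB k ω hω
      rcases hKAe : KA ω with ⟨ka, fa⟩
      rcases hKBe : KB ω with ⟨kb, fb⟩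
      rw [hKAe] at hka; rw [hKBe] at hkb
      dsimp at hka hkb
      subst hka; subst hkb
      simp [hKAe, hKBe, Sigma.mk.inj_iff, ite_and]
    have E2 : (∑ s : Fin (k : ℕ) → Bool, ∑ c : C, A s c) = ∑ ω ∈ Ωk k, P ω := by
      simp only [hA, Finset.sum_filter]
      rw [sum_comm_out2]
      refine Finset.sum_congr rfl fun ω hω => ?_
      have hka := hKA k ω hω
      rcases hKAe : KA ω with ⟨ka, fa⟩
      rw [hKAe] at hka
      dsimp at hka
      subst hka
      simp [hKAe, Sigma.mk.inj_iff, ite_and]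
    have E3 : (∑ s : Fin (k : ℕ) → Bool, ∑ c : C, T s s c)
        = ∑ ω ∈ (Ωk k).filter (fun ω => KA ω = KB ω), P ω := by
      simp only [hT, Finset.sum_filter]
      rw [sum_comm_out2]
      refine Finset.sum_congr rfl fun ω hω => ?_
      have hka := hKA k ω hω
      have hkb := hKB k ω hω
      rcases hKAe : KA ω with ⟨ka, fa⟩
      rcases hKBe : KB ω with ⟨kb, fb⟩
      rw [hKAe] at hka; rw [hKBe] at hkb
      dsimp at hka hkb
      subst hka; subst hkb
      by_cases hfab : fa = fb
      · subst hfab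
        simp [hKAe, hKBe, Sigma.mk.inj_iff, ite_and]
      · have hfab2 : ¬ fb = fa := fun h => hfab h.symm
        simp [hKAe, hKBe, Sigma.mk.inj_iff, ite_and, hfab, hfab2]
    -- pointwise triangle inequality
    have tri : ∀ s s' c,
        |T s s' c - (if s = s' then I c else 0)|
          ≤ (T s s' c + (if s = s' then A s c - 2 * T s s' c else 0))
            + (if s = s' then |A s c - I c| else 0) := by
      intro s s' c
      split_ifs with h
      · subst h
        have h1 : |T s s c - I c| ≤ |T s s c - A s c| + |A s c - I c| :=
          abs_sub_le _ _ _
        have h2 : |T s s c - A s c| = A s c - T s s c := by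
          rw [abs_of_nonpos (by linarith [TleA s s c])]; ring
        rw [h2] at h1
        linarith
      · rw [sub_zero, abs_of_nonneg (Tnn s s' c)]
        linarith
    have collapse : ∀ (g : (Fin (k : ℕ) → Bool) → C → ℝ) (s : Fin (k : ℕ) → Bool),
        (∑ s' : Fin (k : ℕ) → Bool, ∑ c : C, (if s = s' then g s' c else 0))
          = ∑ c : C, g s c := by
      intro g s
      rw [Finset.sum_comm]
      refine Finset.sum_congr rfl fun c _ => ?_
      simp [Finset.sum_ite_eq]
    have step1 :
        (∑ s : Fin (k : ℕ) → Bool, ∑ s' : Fin (k : ℕ) → Bool, ∑ c : C,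
            |T s s' c - (if s = s' then I c else 0)|)
        ≤ (∑ ω ∈ Ωk k, P ω)
          + ((∑ ω ∈ Ωk k, P ω)
              - 2 * ∑ ω ∈ (Ωk k).filter (fun ω => KA ω = KB ω), P ω)
          + ∑ s : Fin (k : ℕ) → Bool, ∑ c : C, |A s c - I c| := by
      have hle : (∑ s : Fin (k : ℕ) → Bool, ∑ s' : Fin (k : ℕ) → Bool, ∑ c : C,
            |T s s' c - (if s = s' then I c else 0)|)
          ≤ ∑ s : Fin (k : ℕ) → Bool, ∑ s' : Fin (k : ℕ) → Bool, ∑ c : C,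
              ((T s s' c + (if s = s' then A s c - 2 * T s s' c else 0))
                + (if s = s' then |A s c - I c| else 0)) := by
        refine Finset.sum_le_sum fun s _ => Finset.sum_le_sum fun s' _ =>
          Finset.sum_le_sum fun c _ => tri s s' c
      refine hle.trans_eq ?_
      have hsplit : (∑ s : Fin (k : ℕ) → Bool, ∑ s' : Fin (k : ℕ) → Bool, ∑ c : C,
            ((T s s' c + (if s = s' then A s c - 2 * T s s' c else 0))
              + (if s = s' then |A s c - I c| else 0)))
          = (∑ s : Fin (k : ℕ) → Bool, ∑ s' : Fin (k : ℕ) → Bool, ∑ c : C, T s s' c)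
            + (∑ s : Fin (k : ℕ) → Bool, ∑ s' : Fin (k : ℕ) → Bool, ∑ c : C,
                (if s = s' then A s c - 2 * T s s' c else 0))
            + (∑ s : Fin (k : ℕ) → Bool, ∑ s' : Fin (k : ℕ) → Bool, ∑ c : C,
                (if s = s' then |A s c - I c| else 0)) := by
        simp [Finset.sum_add_distrib]
      rw [hsplit]
      have h2 : (∑ s : Fin (k : ℕ) → Bool, ∑ s' : Fin (k : ℕ) → Bool, ∑ c : C,
            (if s = s' then A s c - 2 * T s s' c else 0))
          = ∑ s : Fin (k : ℕ) → Bool, ∑ c : C, (A s c - 2 * T s s c) :=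
        Finset.sum_congr rfl fun s _ => collapse (fun s' c => A s c - 2 * T s s' c) s
      have h3 : (∑ s : Fin (k : ℕ) → Bool, ∑ s' : Fin (k : ℕ) → Bool, ∑ c : C,
            (if s = s' then |A s c - I c| else 0))
          = ∑ s : Fin (k : ℕ) → Bool, ∑ c : C, |A s c - I c| :=
        Finset.sum_congr rfl fun s _ => collapse (fun _ c => |A s c - I c|) s
      rw [h2, h3, E1]
      have h4 : (∑ s : Fin (k : ℕ) → Bool, ∑ c : C, (A s c - 2 * T s s c))
          = (∑ ω ∈ Ωk k, P ω)
            - 2 * ∑ ω ∈ (Ωk k).filter (fun ω => KA ω = KB ω), P ω := by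
        calc (∑ s : Fin (k : ℕ) → Bool, ∑ c : C, (A s c - 2 * T s s c))
            = ∑ s : Fin (k : ℕ) → Bool,
                ((∑ c : C, A s c) - 2 * ∑ c : C, T s s c) :=
              Finset.sum_congr rfl fun s _ => by
                rw [Finset.sum_sub_distrib, Finset.mul_sum]
          _ = (∑ s : Fin (k : ℕ) → Bool, ∑ c : C, A s c)
              - 2 * ∑ s : Fin (k : ℕ) → Bool, ∑ c : C, T s s c := by
                rw [Finset.sum_sub_distrib, Finset.mul_sum]
          _ = _ := by rw [E2, E3]
      rw [h4]
    -- totals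
    have htot : (∑ ω ∈ Ωk k, P ω)
        = (∑ ω ∈ (Ωk k).filter (fun ω => KA ω = KB ω), P ω)
          + ∑ ω ∈ (Ωk k).filter (fun ω => KA ω ≠ KB ω), P ω := by
      simp only [ne_eq]
      exact (Finset.sum_filter_add_sum_filter_not (Ωk k) (fun ω => KA ω = KB ω) P).symm
    show (1 / 2) *
        ∑ s : Fin (k : ℕ) → Bool, ∑ s' : Fin (k : ℕ) → Bool, ∑ c : C,
          |T s s' c - (if s = s' then I c else 0)|
      ≤ (∑ ω ∈ (Ωk k).filter (fun ω => KA ω ≠ KB ω), P ω)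
        + (1 / 2) * ∑ s : Fin (k : ℕ) → Bool, ∑ c : C, |A s c - I c|
    linarith [step1, htot]
  -- global combination
  have h1 : (∑ k : Fin (n + 1), ∑ ω ∈ (Ωk k).filter (fun ω => KA ω ≠ KB ω), P ω)
      ≤ ε₁ := by
    have hpd : Set.PairwiseDisjoint (↑(Finset.univ : Finset (Fin (n + 1))))
        (fun k => (Ωk k).filter (fun ω => KA ω ≠ KB ω)) := by
      intro k _ k' _ hne
      exact (hdisj k k' hne).mono (Finset.filter_subset _ _) (Finset.filter_subset _ _)
    have hb : (Finset.univ.biUnion (fun k => (Ωk k).filter (fun ω => KA ω ≠ KB ω)))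
        ⊆ ΩEV.filter (fun ω => KA ω ≠ KB ω) := by
      intro ω hω
      rw [Finset.mem_biUnion] at hω
      obtain ⟨k, -, hk⟩ := hω
      rw [Finset.mem_filter] at hk ⊢
      exact ⟨hEV k hk.1, hk.2⟩
    calc (∑ k : Fin (n + 1), ∑ ω ∈ (Ωk k).filter (fun ω => KA ω ≠ KB ω), P ω)
        = ∑ ω ∈ Finset.univ.biUnion (fun k => (Ωk k).filter (fun ω => KA ω ≠ KB ω)),
            P ω := (Finset.sum_biUnion hpd).symm
      _ ≤ ∑ ω ∈ ΩEV.filter (fun ω => KA ω ≠ KB ω), P ω :=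
          Finset.sum_le_sum_of_subset_of_nonneg hb (fun ω _ _ => hP0 ω)
      _ ≤ ε₁ := hcorr
  calc (∑ k : Fin (n + 1), (1 / 2) *
        ∑ s : Fin (k : ℕ) → Bool, ∑ s' : Fin (k : ℕ) → Bool, ∑ c : C,
          |(∑ ω ∈ (Ωk k).filter
                (fun ω => KA ω = ⟨k, s⟩ ∧ KB ω = ⟨k, s'⟩ ∧ Cr ω = c), P ω)
            - (if s = s' then
                (1 / 2) ^ (k : ℕ) * ∑ ω ∈ (Ωk k).filter (fun ω => Cr ω = c), P ω
              else 0)|)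
      ≤ ∑ k : Fin (n + 1),
          ((∑ ω ∈ (Ωk k).filter (fun ω => KA ω ≠ KB ω), P ω)
            + (1 / 2) *
              ∑ s : Fin (k : ℕ) → Bool, ∑ c : C,
                |(∑ ω ∈ (Ωk k).filter (fun ω => KA ω = ⟨k, s⟩ ∧ Cr ω = c), P ω)
                  - (1 / 2) ^ (k : ℕ) *
                      ∑ ω ∈ (Ωk k).filter (fun ω => Cr ω = c), P ω|) :=
        Finset.sum_le_sum fun k _ => key k
    _ = (∑ k : Fin (n + 1), ∑ ω ∈ (Ωk k).filter (fun ω => KA ω ≠ KB ω), P ω)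
        + ∑ k : Fin (n + 1), (1 / 2) *
            ∑ s : Fin (k : ℕ) → Bool, ∑ c : C,
              |(∑ ω ∈ (Ωk k).filter (fun ω => KA ω = ⟨k, s⟩ ∧ Cr ω = c), P ω)
                - (1 / 2) ^ (k : ℕ) *
                    ∑ ω ∈ (Ωk k).filter (fun ω => Cr ω = c), P ω| :=
        Finset.sum_add_distrib
    _ ≤ ε₁ + ε₂ := add_le_add h1 hsecr
end

section
/- Let Σ be a nonempty finite alphabet, let α be a type of models, let Φ : α → (probability distributions on Σ), let h : α → ℝ be bounded below, and fix a₀ ∈ α. Let m ≥ 1, ε_AT ∈ (0,1], and μ := √(2 (ln(1/ε_AT) + |Σ|·ln(m+1)) / m). Let F_obs be the empirical frequency distribution of m i.i.d. samples from Φ(a₀), and define the estimator b(F) := inf { h(a) : a ∈ α, ∑_{x∈Σ} |Φ(a)(x) − F(x)| ≤ μ }. Then with probability at least 1 − ε_AT over the samples, b(F_obs) ≤ h(a₀). -/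
open Classical MeasureTheory


lemma hoeffding_bernoulli (p l : ℝ) (hp0 : 0 ≤ p) (hp1 : p ≤ 1) (hl : 0 ≤ l) :
    1 - p + p * Real.exp l ≤ Real.exp (p * l + l ^ 2 / 8) := by
  set d : ℝ → ℝ := fun y => 1 - p + p * Real.exp y with hd_def
  have hd : ∀ y, 0 < d y := by
    intro y
    rcases lt_or_eq_of_le hp1 with hlt | rfl
    · have : 0 ≤ p * Real.exp y := mul_nonneg hp0 (Real.exp_pos y).le
      simp only [hd_def]; nlinarith
    · simp only [hd_def]; have := Real.exp_pos y; nlinarith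
  have hder_d : ∀ y, HasDerivAt d (p * Real.exp y) y := by
    intro y
    exact ((Real.hasDerivAt_exp y).const_mul p).const_add (1 - p)
  -- ψ = derivative of φ
  set ψ : ℝ → ℝ := fun y => p + y / 4 - p * Real.exp y / d y with hψ_def
  have hder_ψ : ∀ y, HasDerivAt ψ
      (1 / 4 - (p * Real.exp y * d y - p * Real.exp y * (p * Real.exp y)) / (d y) ^ 2) y := by
    intro y
    have h1 : HasDerivAt (fun y => p * Real.exp y / d y)
        ((p * Real.exp y * d y - p * Real.exp y * (p * Real.exp y)) / (d y) ^ 2) y :=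
      ((Real.hasDerivAt_exp y).const_mul p).div (hder_d y) (hd y).ne'
    have h2 : HasDerivAt (fun y : ℝ => p + y / 4) (1 / 4) y := by
      simpa using ((hasDerivAt_id y).div_const 4).const_add p
    exact h2.sub h1
  have hψmono : Monotone ψ := by
    apply monotone_of_deriv_nonneg
    · intro y; exact (hder_ψ y).differentiableAt
    · intro y
      rw [(hder_ψ y).deriv]
      have key : p * Real.exp y * d y - p * Real.exp y * (p * Real.exp y)
          = (1 - p) * (p * Real.exp y) := by simp only [hd_def]; ring
      rw [key]
      have hab : (1 - p) * (p * Real.exp y) ≤ (d y) ^ 2 / 4 := by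
        have : d y = (1 - p) + p * Real.exp y := rfl
        nlinarith [sq_nonneg ((1 - p) - p * Real.exp y)]
      have hd2 : (0:ℝ) < (d y) ^ 2 := pow_pos (hd y) 2
      rw [sub_nonneg, div_le_iff₀ hd2]
      nlinarith
  have hψ0 : ψ 0 = 0 := by
    simp only [hψ_def, hd_def]
    simp
  have hψnn : ∀ y, 0 ≤ y → 0 ≤ ψ y := by
    intro y hy; rw [← hψ0]; exact hψmono hy
  -- φ
  set φ : ℝ → ℝ := fun y => p * y + y ^ 2 / 8 - Real.log (d y) with hφ_def
  have hder_φ : ∀ y, HasDerivAt φ (ψ y) y := by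
    intro y
    have h1 : HasDerivAt (fun y => Real.log (d y)) (p * Real.exp y / d y) y :=
      (hder_d y).log (hd y).ne'
    have h2 : HasDerivAt (fun y : ℝ => p * y + y ^ 2 / 8) (p + y / 4) y := by
      have := ((hasDerivAt_pow 2 y).div_const 8).const_add 0
      have h3 : HasDerivAt (fun y : ℝ => p * y) p y := by
        simpa using (hasDerivAt_id y).const_mul p
      have h4 : HasDerivAt (fun y : ℝ => y ^ 2 / 8) (y / 4) y := by
        have := (hasDerivAt_pow 2 y).div_const 8
        exact this.congr_deriv (by norm_num; ring)
      exact h3.add h4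
    exact h2.sub h1
  have hφmono : MonotoneOn φ (Set.Ici 0) := by
    apply monotoneOn_of_deriv_nonneg (convex_Ici 0)
    · exact (Continuous.continuousOn (by
        have : Differentiable ℝ φ := fun y => (hder_φ y).differentiableAt
        exact this.continuous))
    · intro y _; exact (hder_φ y).differentiableAt.differentiableWithinAt
    · intro y hy
      rw [(hder_φ y).deriv]
      exact hψnn y (le_of_lt (by simpa using hy))
  have hφ0 : φ 0 = 0 := by simp [hφ_def, hd_def]
  have hφl : 0 ≤ φ l := by
    rw [← hφ0]; exact hφmono Set.self_mem_Ici (by exact hl) hl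
  have : Real.log (d l) ≤ p * l + l ^ 2 / 8 := by
    simp only [hφ_def] at hφl; linarith
  have := (Real.log_le_iff_le_exp (hd l)).mp this
  simpa [hd_def] using this

lemma chernoff_subset {A : Type*} [Fintype A] [DecidableEq A]
    (P : A → ℝ) (hP0 : ∀ x, 0 ≤ P x) (hP1 : ∑ x, P x = 1)
    (m : ℕ) (S : Finset A) (t : ℝ) (ht : 0 ≤ t) :
    ∑ ω : Fin m → A,
      (if (m : ℝ) * ((∑ x ∈ S, P x) + t) ≤ ((Finset.univ.filter (fun i => ω i ∈ S)).card : ℝ)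
        then ∏ i, P (ω i) else 0)
      ≤ Real.exp (-(2 * m * t ^ 2)) := by
  classical
  set p := ∑ x ∈ S, P x with hp_def
  have hp0 : 0 ≤ p := Finset.sum_nonneg fun x _ => hP0 x
  have hp1 : p ≤ 1 := by
    rw [hp_def, ← hP1]
    exact Finset.sum_le_sum_of_subset_of_nonneg (Finset.subset_univ S) fun x _ _ => hP0 x
  set l := 4 * t with hl_def
  have hl : 0 ≤ l := by positivity
  set K : (Fin m → A) → ℝ := fun ω => ((Finset.univ.filter (fun i => ω i ∈ S)).card : ℝ)
    with hK_def
  have hKsum : ∀ ω : Fin m → A, K ω = ∑ i, (if ω i ∈ S then (1:ℝ) else 0) := by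
    intro ω
    show ((Finset.filter (fun i => ω i ∈ S) Finset.univ).card : ℝ) = _
    rw [Finset.card_filter]
    push_cast
    rfl
  -- pointwise bound
  have step1 : ∀ ω : Fin m → A,
      (if (m : ℝ) * (p + t) ≤ K ω then ∏ i, P (ω i) else 0)
        ≤ Real.exp (l * (K ω - m * (p + t))) * ∏ i, P (ω i) := by
    intro ω
    have hw : 0 ≤ ∏ i, P (ω i) := Finset.prod_nonneg fun i _ => hP0 (ω i)
    split_ifs with hc
    · have h1 : (1:ℝ) ≤ Real.exp (l * (K ω - m * (p + t))) := by
        rw [Real.one_le_exp_iff]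
        exact mul_nonneg hl (by linarith)
      nlinarith
    · positivity
  calc ∑ ω : Fin m → A,
      (if (m : ℝ) * (p + t) ≤ K ω then ∏ i, P (ω i) else 0)
      ≤ ∑ ω : Fin m → A, Real.exp (l * (K ω - m * (p + t))) * ∏ i, P (ω i) :=
        Finset.sum_le_sum fun ω _ => step1 ω
    _ = Real.exp (-(l * (m * (p + t)))) *
        ∑ ω : Fin m → A, ∏ i, (P (ω i) * Real.exp (l * (if ω i ∈ S then (1:ℝ) else 0))) := by
        rw [Finset.mul_sum]
        refine Finset.sum_congr rfl fun ω _ => ?_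
        rw [Finset.prod_mul_distrib, ← Real.exp_sum, ← Finset.mul_sum, ← hKsum ω]
        rw [mul_sub, Real.exp_sub, div_eq_mul_inv, ← Real.exp_neg]
        ring
    _ = Real.exp (-(l * (m * (p + t)))) *
        (∑ x, P x * Real.exp (l * (if x ∈ S then (1:ℝ) else 0))) ^ m := by
        congr 1
        rw [← Fin.prod_const m (∑ x, P x * Real.exp (l * (if x ∈ S then (1:ℝ) else 0)))]
        rw [Finset.prod_univ_sum]
        rw [← Fintype.piFinset_univ]
    _ ≤ Real.exp (-(2 * m * t ^ 2)) := by
        have hsum : (∑ x, P x * Real.exp (l * (if x ∈ S then (1:ℝ) else 0)))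
            = 1 - p + p * Real.exp l := by
          rw [← Finset.sum_filter_add_sum_filter_not Finset.univ (fun x => x ∈ S)]
          have e1 : ∑ x ∈ Finset.univ.filter (fun x => x ∈ S),
              P x * Real.exp (l * (if x ∈ S then (1:ℝ) else 0))
              = p * Real.exp l := by
            rw [Finset.filter_univ_mem, hp_def, Finset.sum_mul]
            exact Finset.sum_congr rfl fun x hx => by simp [hx]
          have e2 : ∑ x ∈ Finset.univ.filter (fun x => ¬ x ∈ S),
              P x * Real.exp (l * (if x ∈ S then (1:ℝ) else 0))
              = 1 - p := by
            have : ∑ x ∈ Finset.univ.filter (fun x => ¬ x ∈ S),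
                P x * Real.exp (l * (if x ∈ S then (1:ℝ) else 0))
                = ∑ x ∈ Finset.univ.filter (fun x => ¬ x ∈ S), P x := by
              refine Finset.sum_congr rfl fun x hx => ?_
              have : ¬ x ∈ S := (Finset.mem_filter.mp hx).2
              simp [this]
            rw [this]
            have := Finset.sum_filter_add_sum_filter_not Finset.univ (fun x => x ∈ S) P
            rw [Finset.filter_univ_mem] at this
            rw [hP1] at this
            rw [← hp_def] at this
            linarith
          rw [e1, e2]; ring
        rw [hsum]
        have hb : 1 - p + p * Real.exp l ≤ Real.exp (p * l + l ^ 2 / 8) :=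
          hoeffding_bernoulli p l hp0 hp1 hl
        have hbnn : (0:ℝ) ≤ 1 - p + p * Real.exp l := by
          nlinarith [Real.exp_pos l]
        have hpow : (1 - p + p * Real.exp l) ^ m ≤ Real.exp (p * l + l ^ 2 / 8) ^ m :=
          pow_le_pow_left₀ hbnn hb m
        have : Real.exp (-(l * (m * (p + t)))) * (1 - p + p * Real.exp l) ^ m
            ≤ Real.exp (-(l * (m * (p + t)))) * Real.exp (p * l + l ^ 2 / 8) ^ m :=
          mul_le_mul_of_nonneg_left hpow (Real.exp_pos _).le
        refine this.trans (le_of_eq ?_)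
        rw [← Real.exp_nat_mul, ← Real.exp_add]
        congr 1
        rw [hl_def]; ring

open Classical MeasureTheory

/-- Classical abstraction of Lemmas 1 and 2: the estimator obtained by
minimizing a (bounded-below) objective `h` over the ℓ₁-confidence set of radius
`μ` around the empirical frequencies of `m` i.i.d. samples from `Φ a₀` is,
with probability at least `1 - ε_AT`, a lower bound on `h a₀`. -/
theorem estimator_lower_bounds_truth {A : Type*} [Fintype A] [Nonempty A] [DecidableEq A]
    {α : Type*}
    (Φ : α → A → ℝ) (hΦ0 : ∀ a x, 0 ≤ Φ a x) (hΦ1 : ∀ a, ∑ x, Φ a x = 1)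
    (h : α → ℝ) (hbd : BddBelow (Set.range h)) (a₀ : α)
    (m : ℕ) (hm : 1 ≤ m) (εAT : ℝ) (hε : 0 < εAT) (hε1 : εAT ≤ 1) :
    1 - εAT ≤ ∑ ω : Fin m → A,
      (if sInf { y | ∃ a : α, y = h a ∧
              ∑ x : A, |Φ a x - ((Finset.univ.filter (fun i => ω i = x)).card : ℝ) / m|
                ≤ Real.sqrt (2 * (Real.log (1 / εAT)
                    + (Fintype.card A : ℝ) * Real.log (m + 1)) / m) }
            ≤ h a₀
        then ∏ i, Φ a₀ (ω i) else 0) := by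
  classical
  have hm0 : (0:ℝ) < m := by exact_mod_cast Nat.lt_of_lt_of_le Nat.zero_lt_one hm
  set L : ℝ := Real.log (1 / εAT) + (Fintype.card A : ℝ) * Real.log (m + 1) with hL_def
  have hlog1 : 0 ≤ Real.log (1 / εAT) :=
    Real.log_nonneg (by rw [le_div_iff₀ hε]; linarith)
  have hlogm : 0 ≤ Real.log ((m : ℝ) + 1) := Real.log_nonneg (by linarith)
  have hL0 : 0 ≤ L := by
    rw [hL_def]
    have : 0 ≤ (Fintype.card A : ℝ) * Real.log (m + 1) :=
      mul_nonneg (Nat.cast_nonneg _) hlogm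
    linarith
  set μ : ℝ := Real.sqrt (2 * L / m) with hμ_def
  have hμ0 : 0 ≤ μ := Real.sqrt_nonneg _
  have hμsq : μ ^ 2 = 2 * L / m := Real.sq_sqrt (by positivity)
  set w : (Fin m → A) → ℝ := fun ω => ∏ i, Φ a₀ (ω i) with hw_def
  have hw0 : ∀ ω, 0 ≤ w ω := fun ω => Finset.prod_nonneg fun i _ => hΦ0 a₀ (ω i)
  set dst : (Fin m → A) → ℝ := fun ω =>
    ∑ x : A, |Φ a₀ x - ((Finset.univ.filter (fun i => ω i = x)).card : ℝ) / m| with hdst_def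
  -- counts sum to m
  have hcnt : ∀ ω : Fin m → A,
      ∑ x : A, ((Finset.univ.filter (fun i => ω i = x)).card : ℝ) = m := by
    intro ω
    have : ∑ x : A, (Finset.univ.filter (fun i => ω i = x)).card = m := by
      simp only [Finset.card_filter]
      rw [Finset.sum_comm]
      have h1 : ∀ i : Fin m, (∑ x : A, if ω i = x then 1 else 0) = 1 := by
        intro i
        rw [Finset.sum_ite_eq Finset.univ (ω i) (fun _ => 1)]
        simp
      simp [h1]
    exact_mod_cast congrArg (Nat.cast : ℕ → ℝ) this
  -- K_S as a sum of counts
  have hKS : ∀ (ω : Fin m → A) (S : Finset A),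
      ((Finset.univ.filter (fun i => ω i ∈ S)).card : ℝ)
        = ∑ x ∈ S, ((Finset.univ.filter (fun i => ω i = x)).card : ℝ) := by
    intro ω S
    have : (Finset.univ.filter (fun i => ω i ∈ S)).card
        = ∑ x ∈ S, (Finset.univ.filter (fun i => ω i = x)).card := by
      simp only [Finset.card_filter]
      rw [Finset.sum_comm]
      refine Finset.sum_congr rfl fun i _ => ?_
      rw [Finset.sum_ite_eq S (ω i) (fun _ => 1)]
    exact_mod_cast congrArg (Nat.cast : ℕ → ℝ) this
  -- ℓ₁ > μ implies a subset deviation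
  have hsubset : ∀ ω : Fin m → A, μ < dst ω → ∃ S : Finset A,
      (m : ℝ) * ((∑ x ∈ S, Φ a₀ x) + μ / 2)
        ≤ ((Finset.univ.filter (fun i => ω i ∈ S)).card : ℝ) := by
    intro ω hlt
    set Fx : A → ℝ := fun x => ((Finset.univ.filter (fun i => ω i = x)).card : ℝ) / m
      with hFx_def
    have hF1 : ∑ x : A, Fx x = 1 := by
      rw [hFx_def]
      rw [← Finset.sum_div, hcnt ω, div_self hm0.ne']
    set S₀ : Finset A := Finset.univ.filter (fun x => Φ a₀ x < Fx x) with hS₀_def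
    refine ⟨S₀, ?_⟩
    have hzero : ∑ x : A, (Fx x - Φ a₀ x) = 0 := by
      rw [Finset.sum_sub_distrib, hF1, hΦ1 a₀]; ring
    have hsplitz := Finset.sum_filter_add_sum_filter_not Finset.univ
      (fun x => Φ a₀ x < Fx x) (fun x => Fx x - Φ a₀ x)
    have hsplita := Finset.sum_filter_add_sum_filter_not Finset.univ
      (fun x => Φ a₀ x < Fx x) (fun x => |Φ a₀ x - Fx x|)
    have e1 : ∑ x ∈ Finset.univ.filter (fun x => Φ a₀ x < Fx x), |Φ a₀ x - Fx x|
        = ∑ x ∈ Finset.univ.filter (fun x => Φ a₀ x < Fx x), (Fx x - Φ a₀ x) := by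
      refine Finset.sum_congr rfl fun x hx => ?_
      have : Φ a₀ x < Fx x := (Finset.mem_filter.mp hx).2
      rw [abs_of_neg (by linarith), neg_sub]
    have e2 : ∑ x ∈ Finset.univ.filter (fun x => ¬ Φ a₀ x < Fx x), |Φ a₀ x - Fx x|
        = ∑ x ∈ Finset.univ.filter (fun x => ¬ Φ a₀ x < Fx x), (Φ a₀ x - Fx x) := by
      refine Finset.sum_congr rfl fun x hx => ?_
      have : ¬ Φ a₀ x < Fx x := (Finset.mem_filter.mp hx).2
      rw [abs_of_nonneg (by push_neg at this; linarith)]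
    have e3 : ∑ x ∈ Finset.univ.filter (fun x => ¬ Φ a₀ x < Fx x), (Φ a₀ x - Fx x)
        = - ∑ x ∈ Finset.univ.filter (fun x => ¬ Φ a₀ x < Fx x), (Fx x - Φ a₀ x) := by
      rw [← Finset.sum_neg_distrib]
      exact Finset.sum_congr rfl fun x _ => by ring
    have hdist2 : dst ω = 2 * ∑ x ∈ S₀, (Fx x - Φ a₀ x) := by
      have : dst ω = ∑ x : A, |Φ a₀ x - Fx x| := rfl
      rw [this, ← hsplita, e1, e2, e3, hS₀_def]
      rw [hzero] at hsplitz
      linarith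
    have hgap : μ / 2 < ∑ x ∈ S₀, (Fx x - Φ a₀ x) := by
      rw [hdist2] at hlt; linarith
    have hFS : ∑ x ∈ S₀, Fx x
        = ((Finset.univ.filter (fun i => ω i ∈ S₀)).card : ℝ) / m := by
      rw [hKS ω S₀, Finset.sum_div]
    rw [Finset.sum_sub_distrib, hFS] at hgap
    rw [mul_comm]
    rw [← le_div_iff₀ hm0]
    linarith
  -- the bad-event probability bound
  have key2 : ∑ ω : Fin m → A, (if μ < dst ω then w ω else 0) ≤ εAT := by
    have hterm0 : ∀ (ω : Fin m → A) (S : Finset A),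
        0 ≤ (if (m : ℝ) * ((∑ x ∈ S, Φ a₀ x) + μ / 2)
            ≤ ((Finset.univ.filter (fun i => ω i ∈ S)).card : ℝ) then w ω else 0) := by
      intro ω S
      split_ifs
      · exact hw0 ω
      · exact le_rfl
    have union : ∀ ω : Fin m → A, (if μ < dst ω then w ω else 0)
        ≤ ∑ S : Finset A,
          (if (m : ℝ) * ((∑ x ∈ S, Φ a₀ x) + μ / 2)
              ≤ ((Finset.univ.filter (fun i => ω i ∈ S)).card : ℝ)
            then w ω else 0) := by
      intro ω
      split_ifs with hc
      · obtain ⟨S₀, hS₀⟩ := hsubset ω hc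
        calc w ω = (if (m : ℝ) * ((∑ x ∈ S₀, Φ a₀ x) + μ / 2)
              ≤ ((Finset.univ.filter (fun i => ω i ∈ S₀)).card : ℝ)
            then w ω else 0) := (if_pos hS₀).symm
          _ ≤ _ := Finset.single_le_sum
              (f := fun S : Finset A => (if (m : ℝ) * ((∑ x ∈ S, Φ a₀ x) + μ / 2)
                  ≤ ((Finset.univ.filter (fun i => ω i ∈ S)).card : ℝ)
                then w ω else 0))
              (fun S _ => hterm0 ω S)
              (Finset.mem_univ S₀)
      · exact Finset.sum_nonneg fun S _ => hterm0 ω S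
    calc ∑ ω : Fin m → A, (if μ < dst ω then w ω else 0)
        ≤ ∑ ω : Fin m → A, ∑ S : Finset A,
          (if (m : ℝ) * ((∑ x ∈ S, Φ a₀ x) + μ / 2)
              ≤ ((Finset.univ.filter (fun i => ω i ∈ S)).card : ℝ)
            then w ω else 0) := Finset.sum_le_sum fun ω _ => union ω
      _ = ∑ S : Finset A, ∑ ω : Fin m → A,
          (if (m : ℝ) * ((∑ x ∈ S, Φ a₀ x) + μ / 2)
              ≤ ((Finset.univ.filter (fun i => ω i ∈ S)).card : ℝ)
            then w ω else 0) := Finset.sum_comm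
      _ ≤ ∑ S : Finset A, Real.exp (-(2 * m * (μ / 2) ^ 2)) := by
          refine Finset.sum_le_sum fun S _ => ?_
          exact chernoff_subset (Φ a₀) (hΦ0 a₀) (hΦ1 a₀) m S (μ / 2) (by positivity)
      _ ≤ εAT := by
          rw [Finset.sum_const, Finset.card_univ, Fintype.card_finset, nsmul_eq_mul]
          have hexp : Real.exp (-(2 * m * (μ / 2) ^ 2)) = Real.exp (-L) := by
            congr 1
            have : 2 * (m:ℝ) * (μ / 2) ^ 2 = m * μ ^ 2 / 2 := by ring
            rw [this, hμsq]
            field_simp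
          rw [hexp]
          have hexpL : Real.exp (-L) = εAT / ((m : ℝ) + 1) ^ (Fintype.card A) := by
            rw [hL_def, neg_add, Real.exp_add]
            have h1 : Real.exp (-Real.log (1 / εAT)) = εAT := by
              rw [Real.exp_neg, Real.exp_log (by positivity), one_div, inv_inv]
            have h2 : Real.exp (-((Fintype.card A : ℝ) * Real.log (m + 1)))
                = (((m : ℝ) + 1) ^ (Fintype.card A))⁻¹ := by
              rw [Real.exp_neg]
              congr 1
              rw [Real.exp_nat_mul, Real.exp_log (by positivity)]
            rw [h1, h2, div_eq_mul_inv]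
          rw [hexpL]
          rw [div_eq_mul_inv, ← mul_assoc]
          have hpowle : (2:ℝ) ^ (Fintype.card A) ≤ ((m : ℝ) + 1) ^ (Fintype.card A) := by
            apply pow_le_pow_left₀ (by norm_num)
            have : (1:ℝ) ≤ (m:ℝ) := by exact_mod_cast hm
            linarith
          have hpowpos : (0:ℝ) < ((m : ℝ) + 1) ^ (Fintype.card A) := by positivity
          push_cast
          rw [mul_comm ((2:ℝ) ^ (Fintype.card A)) εAT, mul_assoc]
          nth_rewrite 2 [← mul_one εAT]
          apply mul_le_mul_of_nonneg_left _ hε.le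
          rw [← div_eq_mul_inv, div_le_one hpowpos]
          exact hpowle
  -- total probability is 1
  have hsum1 : ∑ ω : Fin m → A, w ω = 1 := by
    have := Finset.prod_univ_sum (fun _ : Fin m => (Finset.univ : Finset A))
      (fun _ x => Φ a₀ x)
    rw [Fintype.piFinset_univ] at this
    rw [hw_def, ← this]
    simp [hΦ1 a₀]
  have hcompl : ∑ ω : Fin m → A, (if dst ω ≤ μ then w ω else 0)
      = 1 - ∑ ω : Fin m → A, (if μ < dst ω then w ω else 0) := by
    rw [eq_sub_iff_add_eq, ← Finset.sum_add_distrib, ← hsum1]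
    refine Finset.sum_congr rfl fun ω _ => ?_
    rcases le_or_gt (dst ω) μ with hle | hlt
    · rw [if_pos hle, if_neg (not_lt.mpr hle), add_zero]
    · rw [if_neg (not_le.mpr hlt), if_pos hlt, zero_add]
  have key1 : ∀ ω : Fin m → A, dst ω ≤ μ →
      sInf { y | ∃ a : α, y = h a ∧
          ∑ x : A, |Φ a x - ((Finset.univ.filter (fun i => ω i = x)).card : ℝ) / m|
            ≤ Real.sqrt (2 * (Real.log (1 / εAT)
                + (Fintype.card A : ℝ) * Real.log (m + 1)) / m) }
        ≤ h a₀ := by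
    intro ω hle
    have hbdd : BddBelow { y | ∃ a : α, y = h a ∧
        ∑ x : A, |Φ a x - ((Finset.univ.filter (fun i => ω i = x)).card : ℝ) / m|
          ≤ Real.sqrt (2 * (Real.log (1 / εAT)
              + (Fintype.card A : ℝ) * Real.log (m + 1)) / m) } := by
      refine hbd.mono ?_
      rintro y ⟨a, hy, -⟩
      exact ⟨a, hy.symm⟩
    refine csInf_le hbdd ?_
    exact ⟨a₀, rfl, hle⟩
  calc (1:ℝ) - εAT
      ≤ ∑ ω : Fin m → A, (if dst ω ≤ μ then w ω else 0) := by
        rw [hcompl]; linarith [key2]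
    _ ≤ _ := by
        refine Finset.sum_le_sum fun ω _ => ?_
        rcases le_or_gt (dst ω) μ with hle | hlt
        · rw [if_pos hle, if_pos (key1 ω hle)]
        · rw [if_neg (not_le.mpr hlt)]
          split_ifs
          · exact hw0 ω
          · exact le_rfl
end
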